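/- arXiv:1012.5291 — 8 statements merged into one kernel-verified Lean document; each statement's English description precedes it below -/
import Mathlib

section
/- Let n be a positive integer and let R_n denote the dihedral quandle, i.e., the set Z_n of integers modulo n with quandle operation i * j = 2j − i (mod n). Then the automorphism group Aut(R_n) of the quandle R_n is isomorphic (as a group) to the affine group Aff(Z_n) of the integers mod n, i.e., to the semidirect product Z_n ⋊ (Z_n)^×, where (Z_n)^× acts on Z_n by multiplication. -/
/-- The automorphism group of a binary operation `op` on `X`, realized as the
subgroup of the permutation group of `X` consisting of all bijections `f`
with `f (op a b) = op (f a) (f b)` for all `a b`. -/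
def quandleAut {X : Type*} (op : X → X → X) : Subgroup (Equiv.Perm X) where
  carrier := {f | ∀ a b : X, f (op a b) = op (f a) (f b)}
  one_mem' := fun _ _ => rfl
  mul_mem' := by
    intro f g hf hg a b
    rw [Equiv.Perm.mul_apply, hg, hf, Equiv.Perm.mul_apply, Equiv.Perm.mul_apply]
  inv_mem' := by
    intro f hf a b
    apply f.injective
    rw [hf]
    simp

/-- Any quandle automorphism of `R_n` is an arithmetic-progression map on
natural number casts. -/
lemma dihedral_aut_apply_natCast (n : ℕ) (f : Equiv.Perm (ZMod n))
    (hf : ∀ a b : ZMod n, f (2 * b - a) = 2 * f b - f a) :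
    ∀ k : ℕ, f (k : ZMod n) = (f 1 - f 0) * k + f 0 := by
  intro k
  induction k using Nat.twoStepInduction with
  | zero => simp
  | one => push_cast; ring_nf
  | more k ih1 ih2 =>
    have h : ((k + 2 : ℕ) : ZMod n) = 2 * ((k : ZMod n) + 1) - k := by push_cast; ring
    rw [h, hf]
    push_cast at ih1 ih2 ⊢
    rw [ih1, ih2]
    ring

/-- The automorphism group of the dihedral quandle `R_n` (the set `ZMod n`
with operation `i * j = 2j - i`) is isomorphic, as a group, to the affine
group `Aff(ZMod n)` of the integers mod `n` (the maps `x ↦ a x + b` with `a`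
a unit, i.e. the semidirect product `ZMod n ⋊ (ZMod n)ˣ`). -/
theorem aut_dihedral_quandle_iso_affineGroup (n : ℕ) (hn : 0 < n) :
    Nonempty (↥(quandleAut (fun i j : ZMod n => 2 * j - i)) ≃*
      (ZMod n ≃ᵃ[ZMod n] ZMod n)) := by
  haveI : NeZero n := ⟨hn.ne'⟩
  -- the homomorphism from affine equivalences to quandle automorphisms
  have haff : ∀ (e : ZMod n ≃ᵃ[ZMod n] ZMod n) (a b : ZMod n),
      e (2 * b - a) = 2 * e b - e a := by
    intro e a b
    have h1 : (2 * b - a) = (2 * b - 2 * a) +ᵥ a := by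
      simp [vadd_eq_add]; ring
    have h2 : e ((2 * b - 2 * a) +ᵥ a) = e.linear (2 * b - 2 * a) +ᵥ e a :=
      e.toAffineMap.map_vadd a _
    have h3 : 2 * b - 2 * a = (2 : ZMod n) • (b -ᵥ a) := by
      simp [vsub_eq_sub, smul_eq_mul]; ring
    have h4 : e.linear (b -ᵥ a) = e b -ᵥ e a := e.toAffineMap.linearMap_vsub b a
    rw [h1, h2, h3, map_smul, h4]
    simp [vadd_eq_add, vsub_eq_sub, smul_eq_mul]
    ring
  let Φ : (ZMod n ≃ᵃ[ZMod n] ZMod n) →*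
      ↥(quandleAut (fun i j : ZMod n => 2 * j - i)) :=
    { toFun := fun e => ⟨e.toEquiv, fun a b => haff e a b⟩
      map_one' := rfl
      map_mul' := fun e e' => rfl }
  have hinj : Function.Injective Φ := by
    intro e e' h
    ext x
    exact congrArg (fun (g : ↥(quandleAut (fun i j : ZMod n => 2 * j - i))) =>
      (g : Equiv.Perm (ZMod n)) x) h
  have hsurj : Function.Surjective Φ := by
    rintro ⟨f, hf⟩
    have hf' : ∀ a b : ZMod n, f (2 * b - a) = 2 * f b - f a := hf
    set u : ZMod n := f 1 - f 0 with hu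
    have key : ∀ x : ZMod n, f x = u * x + f 0 := by
      intro x
      have : f ((x.val : ℕ) : ZMod n) = u * (x.val : ℕ) + f 0 :=
        dihedral_aut_apply_natCast n f hf' x.val
      rwa [ZMod.natCast_val, ZMod.cast_id] at this
    -- u is a unit
    have hu_unit : IsUnit u := by
      obtain ⟨x, hx⟩ := f.surjective (1 + f 0)
      rw [key x] at hx
      have : u * x = 1 := by linear_combination hx
      exact IsUnit.of_mul_eq_one x this
    obtain ⟨U, hU⟩ := hu_unit
    refine ⟨AffineEquiv.mk' f (LinearEquiv.smulOfUnit U) 0 ?_, ?_⟩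
    · intro p
      rw [key p]
      simp [LinearEquiv.smulOfUnit, DistribMulAction.toLinearEquiv, vadd_eq_add,
        vsub_eq_sub, Units.smul_def, hU, smul_eq_mul]
    · apply Subtype.ext
      apply Equiv.ext
      intro x
      rfl
  exact ⟨(MulEquiv.ofBijective Φ ⟨hinj, hsurj⟩).symm⟩
end

section
/- Let n be a positive integer and let R_n be the dihedral quandle (Z_n with i * j = 2j − i mod n). Every quandle automorphism f of R_n is an affine transformation: there exist a unit a ∈ (Z_n)^× and b ∈ Z_n such that f(x) = ax + b for all x ∈ Z_n. -/
/-- Every quandle automorphism `f` of the dihedral quandle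
`R_n = (ZMod n, i * j = 2j - i)` is an affine transformation: there are a
unit `a` of `ZMod n` and `b : ZMod n` with `f x = a x + b` for all `x`. -/
theorem dihedral_quandle_automorphism_is_affine (n : ℕ) (hn : 0 < n)
    (f : ZMod n → ZMod n) (hbij : Function.Bijective f)
    (hhom : ∀ i j : ZMod n, f (2 * j - i) = 2 * f j - f i) :
    ∃ (a : (ZMod n)ˣ) (b : ZMod n), ∀ x : ZMod n, f x = (a : ZMod n) * x + b := by
  haveI : NeZero n := ⟨hn.ne'⟩
  set a : ZMod n := f 1 - f 0 with ha
  set b : ZMod n := f 0 with hb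
  -- the second difference vanishes
  have hrec : ∀ x : ZMod n, f (x + 2) = 2 * f (x + 1) - f x := by
    intro x
    have := hhom x (x + 1)
    have h2 : 2 * (x + 1) - x = x + 2 := by ring
    rwa [h2] at this
  have dstep : ∀ x : ZMod n, f (x + 1 + 1) - f (x + 1) = f (x + 1) - f x := by
    intro x
    have := hrec x
    have h2 : x + 1 + 1 = x + 2 := by ring
    rw [h2, this]; ring
  have dnat : ∀ k : ℕ, f ((k : ZMod n) + 1) - f (k : ZMod n) = a := by
    intro k
    induction k with
    | zero => simp [ha, hb]
    | succ m ih =>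
        push_cast
        rw [dstep]
        push_cast at ih
        exact ih
  have dconst : ∀ x : ZMod n, f (x + 1) - f x = a := by
    intro x
    have hx : ((x.val : ℕ) : ZMod n) = x := ZMod.natCast_rightInverse x
    rw [← hx]; exact dnat x.val
  have main : ∀ x : ZMod n, f x = a * x + b := by
    have mn : ∀ k : ℕ, f (k : ZMod n) = a * (k : ZMod n) + b := by
      intro k
      induction k with
      | zero => simp [hb]
      | succ m ih =>
          push_cast
          have := dconst (m : ZMod n)
          have h3 : f ((m : ZMod n) + 1) = f (m : ZMod n) + a := by
            linear_combination this
          rw [h3, ih]; ring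
    intro x
    have hx : ((x.val : ℕ) : ZMod n) = x := ZMod.natCast_rightInverse x
    rw [← hx]; exact mn x.val
  -- a is a unit
  obtain ⟨x, hx⟩ := hbij.2 (1 + b)
  have hax : a * x = 1 := by
    have := main x
    rw [hx] at this
    linear_combination -this
  exact ⟨(IsUnit.of_mul_eq_one x hax).unit, b, by
    intro y
    rw [IsUnit.unit_spec]
    exact main y⟩
end

section
/- Let n be a positive integer, and let g : Z_n → Z_n be a function satisfying g(2y − x) = 2g(y) − g(x) for all x, y ∈ Z_n and g(0) = 0. Then g is Z_n-linear: g(λ·x) = λ·g(x) for all λ, x ∈ Z_n. -/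
/-- If `g : ZMod n → ZMod n` satisfies `g (2y - x) = 2 g y - g x` for all
`x y` and `g 0 = 0`, then `g` is `ZMod n`-linear: `g (l * x) = l * g x`. -/
theorem fixing_zero_commuting_with_dihedral_op_is_linear (n : ℕ) (hn : 0 < n)
    (g : ZMod n → ZMod n) (hg : ∀ x y : ZMod n, g (2 * y - x) = 2 * g y - g x)
    (hg0 : g 0 = 0) :
    ∀ l x : ZMod n, g (l * x) = l * g x := by
  have key : ∀ (k : ℕ) (x : ZMod n), g ((k : ZMod n) * x) = (k : ZMod n) * g x := by
    intro k
    induction k using Nat.twoStepInduction with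
    | zero => intro x; simpa using hg0
    | one => intro x; simp
    | more k ih1 ih2 =>
      intro x
      have h : ((k : ZMod n) + 2) * x = 2 * (((k : ZMod n) + 1) * x) - (k : ZMod n) * x := by
        ring
      push_cast
      push_cast at ih2; rw [h, hg, ih2, ih1]
      ring
  intro l x
  haveI : NeZero n := ⟨hn.ne'⟩
  calc g (l * x) = g ((l.val : ZMod n) * x) := by rw [ZMod.natCast_val, ZMod.cast_id]
    _ = (l.val : ZMod n) * g x := key _ _
    _ = l * g x := by rw [ZMod.natCast_val, ZMod.cast_id]
end

section
/- Let n be a positive integer and let R_n be the dihedral quandle (Z_n with i * j = 2j − i mod n). The cardinality of the automorphism group Aut(R_n) equals n·φ(n), where φ is Euler's totient function. -/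
/-- The affine permutation `x ↦ c x + d` of `ZMod n`, for `c` a unit. -/
def affinePerm (n : ℕ) (c : (ZMod n)ˣ) (d : ZMod n) : Equiv.Perm (ZMod n) where
  toFun := fun x => (c : ZMod n) * x + d
  invFun := fun x => ((c⁻¹ : (ZMod n)ˣ) : ZMod n) * (x - d)
  left_inv := by
    intro x
    simp [add_sub_cancel_right, ← mul_assoc, Units.inv_mul]
  right_inv := by
    intro x
    simp [← mul_assoc, Units.mul_inv]

/-- The automorphism group of the dihedral quandle
`R_n = (ZMod n, i * j = 2j - i)` has cardinality `n * φ(n)`, where `φ` is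
Euler's totient function. -/
theorem card_aut_dihedral_quandle (n : ℕ) (hn : 0 < n) :
    Nat.card ↥(quandleAut (fun i j : ZMod n => 2 * j - i)) = n * Nat.totient n := by
  haveI : NeZero n := ⟨hn.ne'⟩
  set G := quandleAut (fun i j : ZMod n => 2 * j - i) with hG
  -- every automorphism is affine
  have affine : ∀ f : Equiv.Perm (ZMod n), f ∈ G → ∀ x : ZMod n,
      f x = (f 1 - f 0) * x + f 0 := by
    intro f hf x
    have key : ∀ k : ℕ, f (k : ZMod n) = (f 1 - f 0) * (k : ZMod n) + f 0 := by
      intro k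
      induction k using Nat.twoStepInduction with
      | zero => simp
      | one => push_cast; ring_nf
      | more k ih1 ih2 =>
        have h := hf (k : ZMod n) (((k + 1 : ℕ) : ZMod n))
        have e : (2 : ZMod n) * ((k + 1 : ℕ) : ZMod n) - (k : ZMod n)
            = ((k + 2 : ℕ) : ZMod n) := by push_cast; ring
        simp only [e] at h
        rw [h, ih1, ih2]
        push_cast; ring
    have hx : ((x.val : ℕ) : ZMod n) = x := ZMod.natCast_rightInverse x
    rw [← hx]
    exact key _
  -- the slope of an automorphism is a unit
  have slopeUnit : ∀ f : Equiv.Perm (ZMod n), f ∈ G → IsUnit (f 1 - f 0) := by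
    intro f hf
    set c := f 1 - f 0 with hc
    have hinj : Function.Injective (fun x : ZMod n => c * x) := by
      intro x y hxy
      apply f.injective
      rw [affine f hf x, affine f hf y]
      simpa using congrArg (· + f 0) hxy
    have hsurj : Function.Surjective (fun x : ZMod n => c * x) :=
      Finite.surjective_of_injective hinj
    obtain ⟨y, hy⟩ := hsurj 1
    exact IsUnit.of_mul_eq_one (a := c) y hy
  -- the bijection (ZMod n)ˣ × ZMod n ≃ G
  have mem : ∀ (c : (ZMod n)ˣ) (d : ZMod n), affinePerm n c d ∈ G := by
    intro c d a b
    show (c : ZMod n) * (2 * b - a) + d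
        = 2 * ((c : ZMod n) * b + d) - ((c : ZMod n) * a + d)
    ring
  let Φ : (ZMod n)ˣ × ZMod n → G := fun p => ⟨affinePerm n p.1 p.2, mem p.1 p.2⟩
  have hbij : Function.Bijective Φ := by
    constructor
    · rintro ⟨c, d⟩ ⟨c', d'⟩ h
      have h' : ∀ x : ZMod n, (c : ZMod n) * x + d = (c' : ZMod n) * x + d' := by
        intro x
        exact congrArg (fun g : G => (g : Equiv.Perm (ZMod n)) x) h
      have hd : d = d' := by simpa using h' 0
      have hcv : (c : ZMod n) = (c' : ZMod n) := by
        have := h' 1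
        rw [hd] at this
        simpa using this
      have hcc : c = c' := Units.ext hcv
      rw [hcc, hd]
    · rintro ⟨f, hf⟩
      obtain ⟨c, hc⟩ := slopeUnit f hf
      refine ⟨(c, f 0), ?_⟩
      apply Subtype.ext
      apply Equiv.ext
      intro x
      show (c : ZMod n) * x + f 0 = f x
      rw [affine f hf x, hc]
  have hcard : Nat.card G = Nat.card ((ZMod n)ˣ × ZMod n) :=
    (Nat.card_eq_of_bijective Φ hbij).symm
  rw [hcard, Nat.card_prod, Nat.card_zmod,
    Nat.card_eq_fintype_card, ZMod.card_units_eq_totient, Nat.mul_comm]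
end

section
/- Let (X,*) be a quandle. If X is faithful, i.e., the map S : X → Inn(X) sending u to the symmetry S_u is injective, then the center of the group Inn(X) is trivial. -/
/-- The inner automorphism group of a binary operation `op` on `X`: the
subgroup of the permutation group of `X` generated by the symmetries
(right translations) `S_u : x ↦ op x u`. -/
def quandleInn {X : Type*} (op : X → X → X) : Subgroup (Equiv.Perm X) :=
  Subgroup.closure {f : Equiv.Perm X | ∃ u : X, ∀ x : X, f x = op x u}

/-- The symmetry `S_u : x ↦ op x u` as a permutation, given that all right
translations are bijective. -/
noncomputable def quandleSymm {X : Type*} (op : X → X → X)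
    (hbij : ∀ b : X, Function.Bijective fun a => op a b) (u : X) : Equiv.Perm X :=
  Equiv.ofBijective _ (hbij u)

/-- The map `S : X → Inn(X)` sending `u` to the symmetry `S_u`. -/
noncomputable def quandleS {X : Type*} (op : X → X → X)
    (hbij : ∀ b : X, Function.Bijective fun a => op a b) (u : X) :
    ↥(quandleInn op) :=
  ⟨quandleSymm op hbij u, Subgroup.subset_closure ⟨u, fun _ => rfl⟩⟩

lemma quandleSymm_apply {X : Type*} (op : X → X → X)
    (hbij : ∀ b : X, Function.Bijective fun a => op a b) (u x : X) :
    quandleSymm op hbij u x = op x u := rfl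

/-- Conjugation of a symmetry by an inner automorphism. -/
lemma conj_symm {X : Type*} (op : X → X → X)
    (hbij : ∀ b : X, Function.Bijective fun a => op a b)
    (hdist : ∀ a b c : X, op (op a b) c = op (op a c) (op b c))
    (f : Equiv.Perm X) (hf : f ∈ quandleInn op) :
    ∀ u : X, f * quandleSymm op hbij u * f⁻¹ = quandleSymm op hbij (f u) := by
  induction hf using Subgroup.closure_induction with
  | mem g hg =>
    obtain ⟨v, hv⟩ := hg
    intro u
    ext x
    simp only [Equiv.Perm.mul_apply, quandleSymm_apply]
    have hx : g (g⁻¹ x) = x := g.apply_symm_apply x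
    rw [hv, hv, hdist, ← hv, hx]
  | one => intro u; simp
  | mul g h hg hh ihg ihh =>
    intro u
    have : g * h * quandleSymm op hbij u * (g * h)⁻¹ =
        g * (h * quandleSymm op hbij u * h⁻¹) * g⁻¹ := by group
    rw [this, ihh u, ihg (h u)]
    rfl
  | inv g hg ihg =>
    intro u
    have h1 := ihg (g⁻¹ u)
    have : quandleSymm op hbij (g⁻¹ u) =
        g⁻¹ * quandleSymm op hbij (g (g⁻¹ u)) * g := by
      rw [← h1]; group
    rw [this, show g (g⁻¹ u) = u from g.apply_symm_apply u, inv_inv]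

/-- If a quandle `(X, op)` is faithful, i.e. the map `S : X → Inn(X)`,
`u ↦ S_u`, is injective, then the center of the group `Inn(X)` is trivial. -/
theorem center_inn_trivial_of_faithful (X : Type*) (op : X → X → X)
    (hfix : ∀ a : X, op a a = a)
    (hbij : ∀ b : X, Function.Bijective fun a => op a b)
    (hdist : ∀ a b c : X, op (op a b) c = op (op a c) (op b c))
    (hfaithful : Function.Injective (quandleS op hbij)) :
    Subgroup.center ↥(quandleInn op) = ⊥ := by
  rw [eq_bot_iff]
  rintro ⟨g, hg⟩ hcen
  rw [Subgroup.mem_center_iff] at hcen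
  rw [Subgroup.mem_bot]
  have hgu : ∀ u : X, g u = u := by
    intro u
    have hc := hcen (quandleS op hbij u)
    have hperm : quandleSymm op hbij u * g = g * quandleSymm op hbij u :=
      congrArg Subtype.val hc
    have hconj := conj_symm op hbij hdist g hg u
    have : quandleSymm op hbij (g u) = quandleSymm op hbij u := by
      rw [← hconj, ← hperm, mul_inv_cancel_right]
    have : quandleS op hbij (g u) = quandleS op hbij u := Subtype.ext this
    exact hfaithful this
  ext x
  simpa using hgu x
end

section
/- Let (X,*) be a quandle such that the map S : X → Inn(X), u ↦ S_u, is a bijection. Then X is isomorphic as a quandle to Conj(Inn(X)) (the group Inn(X) with the conjugation quandle operation), and the center of the group Inn(X) is trivial. -/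
/-- Conjugation by an inner automorphism permutes the symmetries. -/
lemma quandle_conj_symm {X : Type*} (op : X → X → X)
    (hbij : ∀ b : X, Function.Bijective fun a => op a b)
    (hdist : ∀ a b c : X, op (op a b) c = op (op a c) (op b c))
    (p : Equiv.Perm X) (hp : p ∈ quandleInn op) (u : X) :
    p * quandleSymm op hbij u * p⁻¹ = quandleSymm op hbij (p u) := by
  revert u
  refine Subgroup.closure_induction ?_ ?_ ?_ ?_ hp
  · rintro f ⟨v, hv⟩ u
    have hf : f = quandleSymm op hbij v := Equiv.ext hv
    subst hf
    ext x
    have hx : quandleSymm op hbij v ((quandleSymm op hbij v)⁻¹ x) = x :=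
      Equiv.apply_symm_apply _ x
    simp only [Equiv.Perm.mul_apply, quandleSymm_apply] at *
    rw [hdist, hx]
  · intro u; simp
  · intro g h hg hh ihg ihh u
    have : g * (h * quandleSymm op hbij u * h⁻¹) * g⁻¹ =
        quandleSymm op hbij (g (h u)) := by rw [ihh u, ihg (h u)]
    calc g * h * quandleSymm op hbij u * (g * h)⁻¹
        = g * (h * quandleSymm op hbij u * h⁻¹) * g⁻¹ := by group
      _ = quandleSymm op hbij ((g * h) u) := this
  · intro g hg ihg u
    have h1 := ihg (g⁻¹ u)
    rw [show g (g⁻¹ u) = u from Equiv.apply_symm_apply g u] at h1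
    rw [← h1]
    group

/-- If the map `S : X → Inn(X)`, `u ↦ S_u`, of a quandle `(X, op)` is a
bijection, then `X` is isomorphic as a quandle to `Conj(Inn(X))` (the group
`Inn(X)` with the conjugation quandle operation `g * h = h g h⁻¹`), and the
center of the group `Inn(X)` is trivial. -/
theorem quandle_iso_conj_inn_of_S_bijective (X : Type*) (op : X → X → X)
    (hfix : ∀ a : X, op a a = a)
    (hbij : ∀ b : X, Function.Bijective fun a => op a b)
    (hdist : ∀ a b c : X, op (op a b) c = op (op a c) (op b c))
    (hS : Function.Bijective (quandleS op hbij)) :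
    (∃ f : X ≃ ↥(quandleInn op),
        ∀ a b : X, f (op a b) = f b * f a * (f b)⁻¹) ∧
      Subgroup.center ↥(quandleInn op) = ⊥ := by
  have key : ∀ (g : ↥(quandleInn op)) (u : X),
      quandleS op hbij ((g : Equiv.Perm X) u) =
        g * quandleS op hbij u * g⁻¹ := by
    intro g u
    apply Subtype.ext
    push_cast
    exact (quandle_conj_symm op hbij hdist g g.2 u).symm
  constructor
  · refine ⟨Equiv.ofBijective _ hS, fun a b => ?_⟩
    have h2 : op a b = (quandleS op hbij b : Equiv.Perm X) a := rfl
    show quandleS op hbij (op a b) = _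
    rw [h2, key]
    rfl
  · rw [Subgroup.eq_bot_iff_forall]
    intro g hg
    have hgu : ∀ u : X, (g : Equiv.Perm X) u = u := by
      intro u
      apply hS.1
      rw [key g u]
      have := (Subgroup.mem_center_iff.mp hg (quandleS op hbij u)).symm
      rw [this]
      group
    apply Subtype.ext
    exact Equiv.ext hgu
end

section
/- Let Σ_3 be the symmetric group on 3 letters and let Conj(Σ_3) be the quandle on Σ_3 with operation x * y = y x y^{-1}. Then the full quandle automorphism group Aut(Conj(Σ_3)) is isomorphic, as a group, to Σ_3. -/
namespace AutConjS3

abbrev G := Equiv.Perm (Fin 3)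

def t01 : G := Equiv.swap 0 1
def t02 : G := Equiv.swap 0 2
def t12 : G := Equiv.swap 1 2
def c : G := t01 * t02

/-- an element commuting with everything in `G` is trivial -/
lemma central_eq_one : ∀ g : G, (∀ x : G, g * x = x * g) → g = 1 := by decide

abbrev IsT (a : G) : Prop := a ≠ 1 ∧ ∀ x : G, x * a = a * x → x = 1 ∨ x = a

lemma isT_t01 : IsT t01 := by decide
lemma isT_t02 : IsT t02 := by decide

lemma isT_enum : ∀ a : G, IsT a → a = t01 ∨ a = t02 ∨ a = t12 := by decide

lemma cover : ∀ x : G, x = 1 ∨ x = t01 ∨ x = t02 ∨ x = t12 ∨ x = c ∨ x = c * c := by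
  decide

section

variable {f : Equiv.Perm G} (hf : ∀ a b : G, f (b * a * b⁻¹) = f b * f a * (f b)⁻¹)

include hf

lemma comm_transfer {x y : G} (h : f x * f y = f y * f x) : x * y = y * x := by
  have h2 := hf x y
  have h3 : f y * f x * (f y)⁻¹ = f x := mul_inv_eq_iff_eq_mul.mpr h.symm
  have h4 : y * x * y⁻¹ = x := f.injective (h2.trans h3)
  have := congrArg (· * y) h4
  simpa [mul_assoc] using this.symm

lemma comm_transfer' {x y : G} (h : x * y = y * x) : f x * f y = f y * f x := by
  have h4 : y * x * y⁻¹ = x := by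
    rw [← h]; simp [mul_assoc]
  have h2 := hf x y
  rw [h4] at h2
  have := congrArg (· * f y) h2
  simpa [mul_assoc] using this

lemma f_one : f 1 = 1 := by
  apply central_eq_one
  intro z
  obtain ⟨y, rfl⟩ := f.surjective z
  have h := hf 1 y
  simp only [mul_one, mul_inv_cancel] at h
  -- h : f 1 = f y * f 1 * (f y)⁻¹
  have := congrArg (· * f y) h
  have h2 : f y * f 1 = f 1 * f y := by simpa [mul_assoc] using this.symm
  exact h2.symm

lemma isT_transfer {a : G} (ha : IsT a) : IsT (f a) := by
  constructor
  · intro h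
    exact ha.1 (f.injective (h.trans (f_one hf).symm))
  · intro x hx
    obtain ⟨y, rfl⟩ := f.surjective x
    rcases ha.2 y (comm_transfer hf hx) with rfl | rfl
    · exact Or.inl (f_one hf)
    · exact Or.inr rfl

lemma fix_all (h01 : f t01 = t01) (h02 : f t02 = t02) : ∀ x : G, f x = x := by
  have h1 : f 1 = 1 := f_one hf
  have h12 : f t12 = t12 := by
    have h := hf t01 t02
    rw [(by decide : t02 * t01 * t02⁻¹ = t12), h01, h02] at h
    rw [h]; decide
  have hc : f c = c := by
    have h := hf t01 c
    rw [h01] at h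
    rw [(by decide : c * t01 * c⁻¹ = t02), h02] at h
    -- h : t02 = f c * t01 * (f c)⁻¹
    have hsol := (by decide :
      ∀ a : G, a * t01 * a⁻¹ = t02 → a = c ∨ a = t01 ∨ a = t02 ∨ a = t12) (f c) h.symm
    rcases hsol with h' | h' | h' | h'
    · exact h'
    · exact absurd (f.injective (h'.trans h01.symm)) (by decide)
    · exact absurd (f.injective (h'.trans h02.symm)) (by decide)
    · exact absurd (f.injective (h'.trans h12.symm)) (by decide)
  have hc2 : f (c * c) = c * c := by
    rcases cover (f (c * c)) with h | h | h | h | h | h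
    · exact absurd (f.injective (h.trans h1.symm)) (by decide)
    · exact absurd (f.injective (h.trans h01.symm)) (by decide)
    · exact absurd (f.injective (h.trans h02.symm)) (by decide)
    · exact absurd (f.injective (h.trans h12.symm)) (by decide)
    · exact absurd (f.injective (h.trans hc.symm)) (by decide)
    · exact h
  intro x
  rcases cover x with rfl | rfl | rfl | rfl | rfl | rfl <;> assumption

end

/-- conjugation as a homomorphism into the permutations of `G` -/
def φ : G →* Equiv.Perm G := (MulAut.toPerm G).comp MulAut.conj

@[simp] lemma φ_apply (g x : G) : φ g x = g * x * g⁻¹ := rfl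

lemma φ_mem (g : G) : φ g ∈ quandleAut (fun x y : G => y * x * y⁻¹) := by
  intro a b
  simp only [φ_apply]
  group

def ψ : G →* (quandleAut (fun x y : G => y * x * y⁻¹)) :=
  (φ.codRestrict _ φ_mem)

end AutConjS3

/-- The quandle automorphism group of the conjugation quandle on the
symmetric group `Σ₃` is isomorphic, as a group, to `Σ₃`. -/
theorem aut_conj_symmThree_iso_symmThree :
    Nonempty (↥(quandleAut (fun x y : Equiv.Perm (Fin 3) => y * x * y⁻¹)) ≃*
      Equiv.Perm (Fin 3)) := by
  open AutConjS3 in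
  refine ⟨(MulEquiv.ofBijective ψ ⟨?_, ?_⟩).symm⟩
  · -- injectivity
    intro g g' h
    have hφ : φ g = φ g' := congrArg Subtype.val h
    have hx : ∀ x : G, g * x * g⁻¹ = g' * x * g'⁻¹ := by
      intro x
      have := congrArg (fun e : Equiv.Perm G => e x) hφ
      simpa using this
    have hcen : ∀ x : G, (g'⁻¹ * g) * x = x * (g'⁻¹ * g) := by
      intro x
      have h' := hx x
      have : g * x = g' * x * g'⁻¹ * g := by
        rw [← h']; group
      calc g'⁻¹ * g * x = g'⁻¹ * (g * x) := by group
        _ = g'⁻¹ * (g' * x * g'⁻¹ * g) := by rw [this]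
        _ = x * (g'⁻¹ * g) := by group
    have := central_eq_one _ hcen
    rwa [inv_mul_eq_one, eq_comm] at this
  · -- surjectivity
    rintro ⟨f, hfQ⟩
    have hf : ∀ a b : G, f (b * a * b⁻¹) = f b * f a * (f b)⁻¹ := hfQ
    have ha := isT_enum _ (isT_transfer hf isT_t01)
    have hb := isT_enum _ (isT_transfer hf isT_t02)
    have hne : f t01 ≠ f t02 := fun h => (by decide : t01 ≠ t02) (f.injective h)
    obtain ⟨g, hg1, hg2⟩ : ∃ g : G, g * t01 * g⁻¹ = f t01 ∧ g * t02 * g⁻¹ = f t02 := by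
      rcases ha with h1 | h1 | h1 <;> rcases hb with h2 | h2 | h2 <;>
        rw [h1, h2] <;>
        first
          | exact absurd (h1.trans h2.symm) hne
          | decide
    refine ⟨g, ?_⟩
    have hkQ := mul_mem (inv_mem (ψ g).2) hfQ
    have hk : ∀ a b : G, ((φ g)⁻¹ * f) (b * a * b⁻¹) =
        ((φ g)⁻¹ * f) b * ((φ g)⁻¹ * f) a * (((φ g)⁻¹ * f) b)⁻¹ := hkQ
    have hinvφ : ∀ x : G, (φ g)⁻¹ x = g⁻¹ * x * g := by
      intro x
      have : (φ g)⁻¹ = φ g⁻¹ := (map_inv φ g).symm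
      rw [this, φ_apply, inv_inv]
    have hk01 : ((φ g)⁻¹ * f) t01 = t01 := by
      show (φ g)⁻¹ (f t01) = t01
      rw [hinvφ, ← hg1]; group
    have hk02 : ((φ g)⁻¹ * f) t02 = t02 := by
      show (φ g)⁻¹ (f t02) = t02
      rw [hinvφ, ← hg2]; group
    have hall := fix_all hk hk01 hk02
    apply Subtype.ext
    show φ g = f
    apply Equiv.ext
    intro x
    have h' := hall x
    have : (φ g)⁻¹ (f x) = x := h'
    calc φ g x = φ g ((φ g)⁻¹ (f x)) := by rw [this]
      _ = f x := Equiv.apply_symm_apply (φ g) (f x)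
end

section
/- For n even with n ≥ 4, the inner automorphism group Inn(R_n) of the dihedral quandle R_n (Z_n with i * j = 2j − i mod n) is isomorphic to the dihedral group D_{n/2} of order n. -/
namespace InnAux

variable (n : ℕ)

/-- The additive hom `ZMod (n/2) →+ ZMod n`, `i ↦ 2 i`. -/
noncomputable def f (hn : Even n) : ZMod (n / 2) →+ ZMod n :=
  ZMod.lift (n / 2) ⟨zmultiplesHom (ZMod n) 2, by
    obtain ⟨m, hm⟩ := hn
    simp only [zmultiplesHom_apply, zsmul_eq_mul]
    have h1 : (((n / 2 : ℕ) : ℤ) : ZMod n) * 2 = ((n / 2 * 2 : ℕ) : ZMod n) := by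
      rw [Int.cast_natCast, Nat.cast_mul, Nat.cast_ofNat]
    rw [h1, (by omega : n / 2 * 2 = n), ZMod.natCast_self]⟩

theorem f_intCast (hn : Even n) (m : ℤ) :
    f n hn ((m : ℤ) : ZMod (n / 2)) = 2 * (m : ZMod n) := by
  rw [f, ZMod.lift_coe]
  simp [zmultiplesHom_apply, mul_comm]

theorem f_val [NeZero (n / 2)] (hn : Even n) (i : ZMod (n / 2)) :
    f n hn i = 2 * ((i.val : ℕ) : ZMod n) := by
  have : i = (((i.val : ℕ) : ℤ) : ZMod (n / 2)) := by
    push_cast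
    rw [ZMod.natCast_val, ZMod.cast_id]
  conv_lhs => rw [this]
  rw [f_intCast]
  push_cast
  ring

/-- The homomorphism `DihedralGroup (n/2) →* Perm (ZMod n)`. -/
noncomputable def phi (hn : Even n) : DihedralGroup (n / 2) →* Equiv.Perm (ZMod n) where
  toFun d := match d with
    | .r i => Equiv.addRight (f n hn i)
    | .sr i => (Equiv.addRight (f n hn i)).trans (Equiv.neg _)
  map_one' := by
    rw [DihedralGroup.one_def]
    ext x
    simp
  map_mul' a b := by
    rcases a with i | i <;> rcases b with j | j <;>
      ext x <;>
      simp [DihedralGroup.r_mul_r, DihedralGroup.r_mul_sr, DihedralGroup.sr_mul_r,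
        DihedralGroup.sr_mul_sr, map_add, map_sub, Equiv.Perm.mul_apply] <;>
      ring

theorem phi_r_apply (hn : Even n) (i : ZMod (n / 2)) (x : ZMod n) :
    phi n hn (.r i) x = x + f n hn i := rfl

theorem phi_sr_apply (hn : Even n) (i : ZMod (n / 2)) (x : ZMod n) :
    phi n hn (.sr i) x = -(x + f n hn i) := rfl

end InnAux

/-- For `n` even with `n ≥ 4`, the inner automorphism group of the dihedral
quandle `R_n = (ZMod n, i * j = 2j - i)` is isomorphic to the dihedral group
`D_{n/2}` of order `n`. -/
theorem inn_dihedral_quandle_even (n : ℕ) (hn : Even n) (hn4 : 4 ≤ n) :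
    Nonempty (↥(quandleInn (fun i j : ZMod n => 2 * j - i)) ≃*
      DihedralGroup (n / 2)) := by
  haveI : NeZero n := ⟨by omega⟩
  haveI : NeZero (n / 2) := ⟨by omega⟩
  set φ := InnAux.phi n hn with hφ
  -- injectivity of φ
  have hf_inj : ∀ i : ZMod (n / 2), InnAux.f n hn i = 0 → i = 0 := by
    intro i hi
    rw [InnAux.f_val] at hi
    have h2 : ((2 * i.val : ℕ) : ZMod n) = 0 := by push_cast; linear_combination hi
    rw [ZMod.natCast_eq_zero_iff] at h2
    have hlt : i.val < n / 2 := i.val_lt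
    obtain ⟨m, hm⟩ := id hn
    have h3 : 2 * i.val = 0 := Nat.eq_zero_of_dvd_of_lt h2 (by omega)
    have hv : i.val = 0 := by omega
    exact (ZMod.val_eq_zero i).mp hv
  have h2ne : (2 : ZMod n) ≠ 0 := by
    intro h
    have : ((2 : ℕ) : ZMod n) = 0 := by push_cast; exact h
    rw [ZMod.natCast_eq_zero_iff] at this
    have := Nat.le_of_dvd (by norm_num) this
    omega
  have hinj : Function.Injective φ := by
    rw [injective_iff_map_eq_one]
    intro a ha
    rcases a with i | i
    · have h0 : φ (.r i) 0 = (1 : Equiv.Perm (ZMod n)) 0 := by rw [ha]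
      rw [InnAux.phi_r_apply] at h0
      simp at h0
      rw [DihedralGroup.one_def, hf_inj i h0]
    · exfalso
      have h0 : φ (.sr i) 0 = (1 : Equiv.Perm (ZMod n)) 0 := by rw [ha]
      have h1 : φ (.sr i) 1 = (1 : Equiv.Perm (ZMod n)) 1 := by rw [ha]
      rw [InnAux.phi_sr_apply] at h0 h1
      simp at h0 h1
      rw [h0] at h1
      simp at h1
      apply h2ne
      linear_combination -h1
  -- each sr image is a symmetry generator
  have hsr_gen : ∀ i : ZMod (n / 2),
      φ (.sr i) ∈ {g : Equiv.Perm (ZMod n) | ∃ u : ZMod n, ∀ x : ZMod n,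
        g x = 2 * u - x} := by
    intro i
    refine ⟨-((i.val : ℕ) : ZMod n), fun x => ?_⟩
    rw [InnAux.phi_sr_apply, InnAux.f_val]
    ring
  -- range φ = quandleInn
  have hrange : φ.range = quandleInn (fun i j : ZMod n => 2 * j - i) := by
    apply le_antisymm
    · rintro g ⟨d, rfl⟩
      rcases d with i | i
      · have : (DihedralGroup.r i : DihedralGroup (n / 2)) =
            DihedralGroup.sr 0 * DihedralGroup.sr i := by
          rw [DihedralGroup.sr_mul_sr, sub_zero]
        rw [this, map_mul]
        exact mul_mem (Subgroup.subset_closure (hsr_gen 0))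
          (Subgroup.subset_closure (hsr_gen i))
      · exact Subgroup.subset_closure (hsr_gen i)
    · rw [quandleInn]
      apply Subgroup.closure_le _ |>.mpr
      rintro g ⟨u, hu⟩
      refine ⟨.sr ((-(u.val : ℤ) : ℤ) : ZMod (n / 2)), ?_⟩
      ext x
      rw [InnAux.phi_sr_apply, InnAux.f_intCast, hu]
      push_cast
      rw [ZMod.natCast_val, ZMod.cast_id]
      ring
  exact ⟨((MulEquiv.subgroupCongr hrange).symm.trans (MonoidHom.ofInjective hinj).symm)⟩
end
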